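/- Let (Ω, μ) be a finite measure space with normalized expectation E, U ≥ 0 measurable with E[U] = 1 and E[|U log U|] < ∞, and S_NS := E[−U log U]. Then var(U) ≥ e^{−S_NS} − 1 ≥ 1/p* − 1, where p* = μ(U>0)/μ(Ω), with equality throughout when U ∈ {0, 1/p*} a.e. -/

import Mathlib

open MeasureTheory Real Set

/-- Strong Zeroth Law: `var(U) ≥ e^{−S_NS} − 1 ≥ 1/p* − 1`, where
`S_NS = E[−U log U]` is the selective entropy, with equality throughout
when `U ∈ {0, 1/p*}` almost everywhere (selective equilibrium). -/
theorem strong_zeroth_law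
    {Ω : Type*} [MeasurableSpace Ω] (μ : Measure Ω) [IsFiniteMeasure μ]
    (hN : 0 < (μ univ).toReal)
    (U : Ω → ℝ) (hUm : Measurable U) (hU0 : ∀ x, 0 ≤ U x)
    (hU1 : (∫ x, U x ∂μ) / (μ univ).toReal = 1)
    (hU2 : Integrable (fun x => (U x) ^ 2) μ)
    (hent : Integrable (fun x => U x * Real.log (U x)) μ) :
    let N := (μ univ).toReal
    let pstar := (μ {x | 0 < U x}).toReal / N
    let v := (∫ x, (U x) ^ 2 ∂μ) / N - 1
    let S := (∫ x, -(U x * Real.log (U x)) ∂μ) / N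
    (v ≥ Real.exp (-S) - 1) ∧ Real.exp (-S) - 1 ≥ 1 / pstar - 1 ∧
      ((∀ᵐ x ∂μ, U x = 0 ∨ U x = 1 / pstar) →
        v = Real.exp (-S) - 1 ∧ Real.exp (-S) - 1 = 1 / pstar - 1) := by
  intro N pstar v S
  have hNpos : 0 < N := hN
  have hNne : N ≠ 0 := ne_of_gt hNpos
  set A : Set Ω := {x | 0 < U x} with hA
  have hAm : MeasurableSet A := measurableSet_lt measurable_const hUm
  set P : ℝ := (μ A).toReal with hPdef
  have hPnn : 0 ≤ P := ENNReal.toReal_nonneg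
  -- integral of U equals N
  have hI1 : ∫ x, U x ∂μ = N := by
    have := hU1
    field_simp at this
    exact this
  -- U is integrable
  have hUint : Integrable U μ := by
    refine (hU2.add (integrable_const 1)).mono' hUm.aestronglyMeasurable ?_
    filter_upwards with x
    have h0 := hU0 x
    rw [Real.norm_eq_abs, abs_of_nonneg h0]
    show U x ≤ U x ^ 2 + 1
    nlinarith [sq_nonneg (U x - 1)]
  -- P > 0
  have hP : 0 < P := by
    rcases hPnn.lt_or_eq with h | h
    · exact h
    · exfalso
      have hμA : μ A = 0 := by
        have := h.symm
        rw [hPdef] at this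
        exact (ENNReal.toReal_eq_zero_iff _).mp this |>.resolve_right (measure_ne_top μ A)
      have hU0ae : ∀ᵐ x ∂μ, U x = 0 := by
        have hcompl : ∀ᵐ x ∂μ, x ∉ A := by
          rw [ae_iff]
          simpa using hμA
        filter_upwards [hcompl] with x hx
        have : ¬ 0 < U x := hx
        linarith [hU0 x]
      have : ∫ x, U x ∂μ = 0 := by
        rw [integral_congr_ae hU0ae, integral_zero]
      rw [hI1] at this
      exact hNne this
  have hPne : P ≠ 0 := ne_of_gt hP
  -- ∫ U² > 0
  have hI2nn : 0 ≤ ∫ x, (U x) ^ 2 ∂μ := integral_nonneg fun x => sq_nonneg _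
  have hI2pos : 0 < ∫ x, (U x) ^ 2 ∂μ := by
    rcases hI2nn.lt_or_eq with h | h
    · exact h
    · exfalso
      have hz : (fun x => (U x) ^ 2) =ᵐ[μ] 0 :=
        (integral_eq_zero_iff_of_nonneg (fun x => sq_nonneg (U x)) hU2).mp h.symm
      have hU0ae : ∀ᵐ x ∂μ, U x = 0 := by
        filter_upwards [hz] with x hx
        exact pow_eq_zero_iff (two_ne_zero) |>.mp hx
      have : ∫ x, U x ∂μ = 0 := by
        rw [integral_congr_ae hU0ae, integral_zero]
      rw [hI1] at this
      exact hNne this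
  -- -S = IL / N
  set IL : ℝ := ∫ x, U x * Real.log (U x) ∂μ with hIL
  have hSneg : -S = IL / N := by
    show -((∫ x, -(U x * Real.log (U x)) ∂μ) / N) = IL / N
    rw [integral_neg]
    ring
  -- Part 1 : exp(-S) ≤ I2/N
  set c : ℝ := (∫ x, (U x) ^ 2 ∂μ) / N with hc
  have hcpos : 0 < c := div_pos hI2pos hNpos
  have hcne : c ≠ 0 := ne_of_gt hcpos
  have hcN : ∫ x, (U x) ^ 2 ∂μ = c * N := by
    rw [hc]; field_simp
  have hpt1 : ∀ x, c * (U x * Real.log (U x)) ≤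
      c * (U x * Real.log c) + ((U x) ^ 2 - c * U x) := by
    intro x
    rcases (hU0 x).eq_or_lt with h | h
    · simp [← h]
    · have hlog : Real.log (U x / c) ≤ U x / c - 1 :=
        Real.log_le_sub_one_of_pos (div_pos h hcpos)
      rw [Real.log_div (ne_of_gt h) hcne] at hlog
      have h2 : U x * (Real.log (U x) - Real.log c) ≤ U x * (U x / c - 1) :=
        mul_le_mul_of_nonneg_left hlog (hU0 x)
      have h3 : c * (U x * (U x / c - 1)) = (U x) ^ 2 - c * U x := by
        field_simp
      nlinarith [mul_le_mul_of_nonneg_left h2 hcpos.le]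
  have hint1 : c * IL ≤ c * N * Real.log c := by
    have hRint : Integrable (fun x => c * (U x * Real.log c) + ((U x) ^ 2 - c * U x)) μ :=
      ((hUint.mul_const _).const_mul c).add (hU2.sub (hUint.const_mul c))
    have hmono := integral_mono (hent.const_mul c) hRint hpt1
    rw [integral_const_mul] at hmono
    have hadd : Integrable (fun x => c * (U x * Real.log c)) μ :=
      (hUint.mul_const _).const_mul c
    have hsub : Integrable (fun x => (U x) ^ 2 - c * U x) μ :=
      hU2.sub (hUint.const_mul c)
    have hR : ∫ x, (c * (U x * Real.log c) + ((U x) ^ 2 - c * U x)) ∂μ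
        = c * N * Real.log c := by
      rw [integral_add hadd hsub, integral_sub hU2 (hUint.const_mul c),
        integral_const_mul, integral_const_mul, integral_mul_const, hI1, hcN]
      ring
    rw [hR] at hmono
    exact hmono
  have hILle : IL / N ≤ Real.log c := by
    have : IL ≤ N * Real.log c := by
      have h' : c * IL ≤ c * (N * Real.log c) := by rw [← mul_assoc]; exact hint1
      exact le_of_mul_le_mul_left h' hcpos
    rw [div_le_iff₀ hNpos]
    linarith
  have hexp1 : Real.exp (-S) ≤ c := by
    rw [hSneg]
    calc Real.exp (IL / N) ≤ Real.exp (Real.log c) := Real.exp_le_exp.mpr hILle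
    _ = c := Real.exp_log hcpos
  -- Part 2 : exp(-S) ≥ 1/pstar
  set a : ℝ := N / P with ha
  have hapos : 0 < a := div_pos hNpos hP
  have hane : a ≠ 0 := ne_of_gt hapos
  have haP : a * P = N := by rw [ha]; field_simp
  have hinv : 1 / pstar = a := by
    show 1 / (P / N) = a
    rw [one_div_div, ha]
  have hpt2 : ∀ x, U x * Real.log a + U x - a * A.indicator (fun _ => (1:ℝ)) x ≤
      U x * Real.log (U x) := by
    intro x
    rcases (hU0 x).eq_or_lt with h | h
    · have hxA : x ∉ A := by
        intro hx
        rw [hA] at hx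
        exact absurd hx (by simp [← h])
      simp [← h, Set.indicator_of_notMem hxA]
    · have hxA : x ∈ A := h
      rw [Set.indicator_of_mem hxA]
      have hlog : Real.log (a / U x) ≤ a / U x - 1 :=
        Real.log_le_sub_one_of_pos (div_pos hapos h)
      rw [Real.log_div hane (ne_of_gt h)] at hlog
      have h2 : U x * (Real.log a - Real.log (U x)) ≤ U x * (a / U x - 1) :=
        mul_le_mul_of_nonneg_left hlog (hU0 x)
      have h3 : U x * (a / U x - 1) = a - U x := by
        field_simp
      rw [h3] at h2
      nlinarith
  have hIndInt : Integrable (fun x => A.indicator (fun _ => (1:ℝ)) x) μ :=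
    (integrable_const (1:ℝ)).indicator hAm
  have hint2 : N * Real.log a ≤ IL := by
    have hsum : Integrable (fun x => U x * Real.log a + U x) μ :=
      (hUint.mul_const _).add hUint
    have hLint : Integrable
        (fun x => U x * Real.log a + U x - a * A.indicator (fun _ => (1:ℝ)) x) μ :=
      hsum.sub (hIndInt.const_mul a)
    have hmono := integral_mono hLint hent hpt2
    have hL : ∫ x, (U x * Real.log a + U x - a * A.indicator (fun _ => (1:ℝ)) x) ∂μ
        = N * Real.log a := by
      rw [integral_sub hsum (hIndInt.const_mul a),
        integral_add (hUint.mul_const _) hUint, integral_mul_const, integral_const_mul,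
        hI1]
      have : ∫ x, A.indicator (fun _ => (1:ℝ)) x ∂μ = P := by
        rw [integral_indicator_const (1:ℝ) hAm]
        simp [hPdef, measureReal_def]
      rw [this]
      linarith [haP]
    rw [hL] at hmono
    exact hmono
  have hexp2 : a ≤ Real.exp (-S) := by
    rw [hSneg]
    calc a = Real.exp (Real.log a) := (Real.exp_log hapos).symm
    _ ≤ Real.exp (IL / N) := by
        apply Real.exp_le_exp.mpr
        rw [le_div_iff₀ hNpos]
        linarith
  refine ⟨?_, ?_, ?_⟩
  · show (∫ x, (U x) ^ 2 ∂μ) / N - 1 ≥ Real.exp (-S) - 1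
    have : (∫ x, (U x) ^ 2 ∂μ) / N = c := hc.symm
    linarith
  · rw [hinv]; linarith
  · intro hEq
    -- equality case
    have hUeq : U =ᵐ[μ] fun x => A.indicator (fun _ => a) x := by
      filter_upwards [hEq] with x hx
      rcases hx with h0 | h1
      · have hxA : x ∉ A := by
          intro hx; rw [hA] at hx; exact absurd hx (by simp [h0])
        simp [h0, Set.indicator_of_notMem hxA]
      · rw [hinv] at h1
        have hxA : x ∈ A := by
          rw [hA]; show 0 < U x; rw [h1]; exact hapos
        simp [h1, Set.indicator_of_mem hxA]
    have hI2eq : ∫ x, (U x) ^ 2 ∂μ = a ^ 2 * P := by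
      have hcong : (fun x => (U x) ^ 2) =ᵐ[μ] fun x => A.indicator (fun _ => a ^ 2) x := by
        filter_upwards [hUeq] with x hx
        by_cases hxA : x ∈ A
        · simp [hx, Set.indicator_of_mem hxA]
        · simp [hx, Set.indicator_of_notMem hxA]
      rw [integral_congr_ae hcong, integral_indicator_const _ hAm]
      simp [hPdef, mul_comm, measureReal_def]
    have hILeq : IL = N * Real.log a := by
      have hcong : (fun x => U x * Real.log (U x)) =ᵐ[μ]
          fun x => A.indicator (fun _ => a * Real.log a) x := by
        filter_upwards [hUeq] with x hx
        by_cases hxA : x ∈ A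
        · simp [hx, Set.indicator_of_mem hxA]
        · simp [hx, Set.indicator_of_notMem hxA]
      rw [hIL, integral_congr_ae hcong, integral_indicator_const _ hAm]
      have : (μ A).toReal = P := rfl
      rw [smul_eq_mul, measureReal_def, this]
      rw [mul_comm a P] at haP
      calc P * (a * Real.log a) = (P * a) * Real.log a := by ring
      _ = N * Real.log a := by rw [haP]
    have hexpS : Real.exp (-S) = a := by
      rw [hSneg, hILeq, mul_comm, mul_div_assoc, div_self hNne, mul_one]
      exact Real.exp_log hapos
    constructor
    · show (∫ x, (U x) ^ 2 ∂μ) / N - 1 = Real.exp (-S) - 1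
      rw [hI2eq, hexpS, ← haP]
      field_simp
    · rw [hexpS, hinv]
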